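/- arXiv:2602.04310 — 7 statements merged into one kernel-verified Lean document; each statement's English description precedes it below -/
import Mathlib

section
/- Suppose W : ℝⁿ → ℝ≥0 satisfies W(x) ≤ c(x) + max_{i ∈ ⟨M⟩} W(f_i(x)) for all x, W is continuous at 0 with W(0) = 0, and every trajectory of the switched system converges to 0. Then W(x) ≤ J(x) for all x ∈ ℝⁿ. -/
open scoped ENNReal
open Filter

/-- Trajectory of the switched system `x_{k+1} = f_{σ(k)}(x_k)` starting at `x`. -/
def traj {n M : ℕ} (f : Fin M → (Fin n → ℝ) → (Fin n → ℝ))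
    (σ : ℕ → Fin M) (x : Fin n → ℝ) : ℕ → (Fin n → ℝ)
  | 0 => x
  | k + 1 => f (σ k) (traj f σ x k)

/-- Worst-case value function `J(x) = sup_σ ∑_k c(ξ(k,x,σ))`, valued in `[0,∞]`. -/
noncomputable def valueFun {n M : ℕ} (f : Fin M → (Fin n → ℝ) → (Fin n → ℝ))
    (c : (Fin n → ℝ) → ℝ) (x : Fin n → ℝ) : ℝ≥0∞ :=
  ⨆ σ : ℕ → Fin M, ∑' k : ℕ, ENNReal.ofReal (c (traj f σ x k))

theorem stmt_1 {n M : ℕ} (hM : 0 < M)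
    (f : Fin M → (Fin n → ℝ) → (Fin n → ℝ))
    (c W : (Fin n → ℝ) → ℝ)
    (hc : ∀ x, 0 ≤ c x) (hW : ∀ x, 0 ≤ W x)
    (hDP : ∀ x, W x ≤ c x + ⨆ i : Fin M, W (f i x))
    (hcont : ContinuousAt W 0) (hW0 : W 0 = 0)
    (hstab : ∀ (σ : ℕ → Fin M) (x : Fin n → ℝ),
      Tendsto (traj f σ x) atTop (nhds 0)) :
    ∀ x : Fin n → ℝ, ENNReal.ofReal (W x) ≤ valueFun f c x := by
  intro x
  have hMne : Nonempty (Fin M) := ⟨⟨0, hM⟩⟩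
  have hφ : ∀ y : Fin n → ℝ, ∃ i, ∀ j, W (f j y) ≤ W (f i y) := fun y =>
    Finite.exists_max (fun i => W (f i y))
  choose φ hφ' using hφ
  let g : ℕ → (Fin n → ℝ) := fun k => Nat.rec x (fun _ y => f (φ y) y) k
  let σ : ℕ → Fin M := fun k => φ (g k)
  have hg : ∀ k, traj f σ x k = g k := by
    intro k; induction k with
    | zero => rfl
    | succ k ih => simp only [traj, ih]; rfl
  have hstep : ∀ k, W (g k) ≤ c (g k) + W (g (k + 1)) := by
    intro k
    calc W (g k) ≤ c (g k) + ⨆ i, W (f i (g k)) := hDP _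
      _ ≤ c (g k) + W (f (φ (g k)) (g k)) := by
          gcongr
          exact ciSup_le fun j => hφ' _ j
      _ = c (g k) + W (g (k + 1)) := rfl
  have hsum : ∀ N, W x ≤ ∑ k ∈ Finset.range N, c (g k) + W (g N) := by
    intro N; induction N with
    | zero => simp [g]
    | succ N ih =>
      calc W x ≤ ∑ k ∈ Finset.range N, c (g k) + W (g N) := ih
        _ ≤ ∑ k ∈ Finset.range N, c (g k) + (c (g N) + W (g (N + 1))) := by
            gcongr; exact hstep N
        _ = ∑ k ∈ Finset.range (N + 1), c (g k) + W (g (N + 1)) := by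
            rw [Finset.sum_range_succ]; ring
  set S : ℝ≥0∞ := ∑' k : ℕ, ENNReal.ofReal (c (traj f σ x k)) with hS
  have hE : ∀ N, ENNReal.ofReal (W x) ≤ S + ENNReal.ofReal (W (g N)) := by
    intro N
    calc ENNReal.ofReal (W x)
        ≤ ENNReal.ofReal (∑ k ∈ Finset.range N, c (g k) + W (g N)) :=
          ENNReal.ofReal_le_ofReal (hsum N)
      _ ≤ ENNReal.ofReal (∑ k ∈ Finset.range N, c (g k)) + ENNReal.ofReal (W (g N)) :=
          ENNReal.ofReal_add_le
      _ = (∑ k ∈ Finset.range N, ENNReal.ofReal (c (g k))) + ENNReal.ofReal (W (g N)) := by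
          rw [ENNReal.ofReal_sum_of_nonneg (fun k _ => hc _)]
      _ ≤ S + ENNReal.ofReal (W (g N)) := by
          gcongr
          have : ∀ k ∈ Finset.range N, ENNReal.ofReal (c (g k)) =
              ENNReal.ofReal (c (traj f σ x k)) := fun k _ => by rw [hg]
          rw [Finset.sum_congr rfl this]
          exact ENNReal.sum_le_tsum _
  have hgt : Tendsto g atTop (nhds 0) := by
    have := hstab σ x
    simpa [funext hg] using this
  have hWt : Tendsto (fun N => ENNReal.ofReal (W (g N))) atTop (nhds 0) := by
    have h1 : Tendsto (fun N => W (g N)) atTop (nhds 0) := by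
      have := hcont.tendsto.comp hgt
      simpa [hW0, Function.comp_def] using this
    have := (ENNReal.continuous_ofReal.tendsto 0).comp h1
    simpa [Function.comp_def] using this
  have hlim : Tendsto (fun N => S + ENNReal.ofReal (W (g N))) atTop (nhds S) := by
    have := Tendsto.const_add S hWt
    simpa using this
  have hfin : ENNReal.ofReal (W x) ≤ S := ge_of_tendsto' hlim hE
  exact hfin.trans (le_iSup (fun σ' => ∑' k : ℕ, ENNReal.ofReal (c (traj f σ' x k))) σ)
end

section
/- Let G = (S, E) be a directed labeled graph that is complete for ⟨M⟩ (every node α and label i has an outgoing edge (α,β,i) ∈ E for some β). If nonnegative functions {V_α}_{α∈S} satisfy V_α(x) ≥ c(x) + V_β(f_i(x)) for all x and all edges (α,β,i) ∈ E, then V(x) := min_{α∈S} V_α(x) satisfies V(x) ≥ c(x) + max_{i∈⟨M⟩} V(f_i(x)) for all x, and consequently V(x) ≥ J(x) for all x. -/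
open scoped ENNReal
open Filter

theorem stmt_3 {n M : ℕ} (hM : 0 < M) {S : Type} [Fintype S] [Nonempty S]
    (Eset : Set (S × S × Fin M))
    (hcomplete : ∀ (α : S) (i : Fin M), ∃ β : S, (α, β, i) ∈ Eset)
    (f : Fin M → (Fin n → ℝ) → (Fin n → ℝ))
    (c : (Fin n → ℝ) → ℝ) (hc : ∀ x, 0 ≤ c x)
    (V : S → (Fin n → ℝ) → ℝ) (hV : ∀ α x, 0 ≤ V α x)
    (hineq : ∀ (α β : S) (i : Fin M), (α, β, i) ∈ Eset →
      ∀ x : Fin n → ℝ, c x + V β (f i x) ≤ V α x) :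
    (∀ x : Fin n → ℝ,
      c x + (⨆ i : Fin M, ⨅ α : S, V α (f i x)) ≤ ⨅ α : S, V α x) ∧
    (∀ x : Fin n → ℝ, valueFun f c x ≤ ENNReal.ofReal (⨅ α : S, V α x)) := by

  have hMne : Nonempty (Fin M) := ⟨⟨0, hM⟩⟩
  set W : (Fin n → ℝ) → ℝ := fun x => ⨅ α : S, V α x with hWdef
  have hW0 : ∀ x, 0 ≤ W x := fun x => le_ciInf fun α => hV α x
  have key : ∀ (x : Fin n → ℝ) (i : Fin M), c x + W (f i x) ≤ W x := by
    intro x i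
    refine le_ciInf fun α => ?_
    obtain ⟨β, hβ⟩ := hcomplete α i
    calc c x + W (f i x) ≤ c x + V β (f i x) := by
          gcongr
          exact ciInf_le (Finite.bddBelow_range _) β
      _ ≤ V α x := hineq α β i hβ x
  have part1 : ∀ x : Fin n → ℝ,
      c x + (⨆ i : Fin M, ⨅ α : S, V α (f i x)) ≤ ⨅ α : S, V α x := by
    intro x
    have h : (⨆ i : Fin M, W (f i x)) ≤ W x - c x :=
      ciSup_le fun i => by linarith [key x i]
    simpa using by linarith
  refine ⟨part1, ?_⟩
  have shift : ∀ (σ : ℕ → Fin M) (x : Fin n → ℝ) (k : ℕ),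
      traj f σ x (k+1) = traj f (fun j => σ (j+1)) (f (σ 0) x) k := by
    intro σ x k
    induction k with
    | zero => rfl
    | succ k ih =>
      show f (σ (k+1)) (traj f σ x (k+1)) = _
      rw [ih]; rfl
  have psum : ∀ (N : ℕ) (σ : ℕ → Fin M) (x : Fin n → ℝ),
      ∑ k ∈ Finset.range N, c (traj f σ x k) ≤ W x := by
    intro N
    induction N with
    | zero => intro σ x; simpa using hW0 x
    | succ N ih =>
      intro σ x
      rw [Finset.sum_range_succ']
      have h1 : ∑ k ∈ Finset.range N, c (traj f σ x (k+1))
          = ∑ k ∈ Finset.range N, c (traj f (fun j => σ (j+1)) (f (σ 0) x) k) := by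
        refine Finset.sum_congr rfl fun k _ => by rw [shift]
      rw [h1]
      have h2 := ih (fun j => σ (j+1)) (f (σ 0) x)
      have h3 := key x (σ 0)
      simp only [traj]
      linarith
  intro x
  refine iSup_le fun σ => ?_
  rw [ENNReal.tsum_eq_iSup_sum]
  refine iSup_le fun s => ?_
  have hsub : s ⊆ Finset.range (s.sup id + 1) := fun k hk =>
    Finset.mem_range.mpr (Nat.lt_succ_of_le (Finset.le_sup (f := id) hk))
  calc ∑ k ∈ s, ENNReal.ofReal (c (traj f σ x k))
      ≤ ∑ k ∈ Finset.range (s.sup id + 1), ENNReal.ofReal (c (traj f σ x k)) :=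
        Finset.sum_le_sum_of_subset hsub
    _ = ENNReal.ofReal (∑ k ∈ Finset.range (s.sup id + 1), c (traj f σ x k)) :=
        (ENNReal.ofReal_sum_of_nonneg fun k _ => hc _).symm
    _ ≤ ENNReal.ofReal (W x) := ENNReal.ofReal_le_ofReal (psum _ σ x)
end

section
/- Let G = (S, E) be a directed labeled graph that is co-complete for ⟨M⟩ (every node β and label i has an incoming edge (α,β,i) ∈ E for some α). If nonnegative functions {V_α}_{α∈S} satisfy V_α(x) ≥ c(x) + V_β(f_i(x)) for all x and all edges (α,β,i) ∈ E, then V(x) := max_{α∈S} V_α(x) satisfies V(x) ≥ c(x) + max_{i∈⟨M⟩} V(f_i(x)) for all x, and consequently V(x) ≥ J(x) for all x. -/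
open scoped ENNReal
open Filter

theorem stmt_4 {n M : ℕ} (hM : 0 < M) {S : Type} [Fintype S] [Nonempty S]
    (Eset : Set (S × S × Fin M))
    (hcocomplete : ∀ (β : S) (i : Fin M), ∃ α : S, (α, β, i) ∈ Eset)
    (f : Fin M → (Fin n → ℝ) → (Fin n → ℝ))
    (c : (Fin n → ℝ) → ℝ) (hc : ∀ x, 0 ≤ c x)
    (V : S → (Fin n → ℝ) → ℝ) (hV : ∀ α x, 0 ≤ V α x)
    (hineq : ∀ (α β : S) (i : Fin M), (α, β, i) ∈ Eset →
      ∀ x : Fin n → ℝ, c x + V β (f i x) ≤ V α x) :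
    (∀ x : Fin n → ℝ,
      c x + (⨆ i : Fin M, ⨆ α : S, V α (f i x)) ≤ ⨆ α : S, V α x) ∧
    (∀ x : Fin n → ℝ, valueFun f c x ≤ ENNReal.ofReal (⨆ α : S, V α x)) := by
  haveI : Nonempty (Fin M) := ⟨⟨0, hM⟩⟩
  set W : (Fin n → ℝ) → ℝ := fun y => ⨆ α : S, V α y with hW
  have hWnn : ∀ y, 0 ≤ W y := fun y =>
    le_trans (hV (Classical.arbitrary S) y)
      (le_ciSup (f := fun α : S => V α y) (Set.Finite.bddAbove (Set.finite_range _)) _)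
  have part1 : ∀ x : Fin n → ℝ,
      c x + (⨆ i : Fin M, ⨆ α : S, V α (f i x)) ≤ W x := by
    intro x
    rw [add_comm, ← le_sub_iff_add_le]
    refine ciSup_le fun i => ciSup_le fun β => ?_
    rw [le_sub_iff_add_le, add_comm]
    obtain ⟨α, hα⟩ := hcocomplete β i
    exact le_trans (hineq α β i hα x)
      (le_ciSup (f := fun α : S => V α x) (Set.Finite.bddAbove (Set.finite_range _)) α)
  refine ⟨part1, ?_⟩
  have key : ∀ (i : Fin M) (x : Fin n → ℝ), c x + W (f i x) ≤ W x := by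
    intro i x
    refine le_trans (add_le_add_right ?_ _) (part1 x)
    refine ciSup_le fun α => ?_
    refine le_trans (le_ciSup (f := fun α : S => V α (f i x)) (Set.Finite.bddAbove (Set.finite_range _)) α)
      (le_ciSup (Set.Finite.bddAbove (Set.finite_range (fun i => ⨆ α : S, V α (f i x)))) i)
  have hpartial : ∀ (σ : ℕ → Fin M) (x : Fin n → ℝ) (N : ℕ),
      (∑ k ∈ Finset.range N, c (traj f σ x k)) + W (traj f σ x N) ≤ W x := by
    intro σ x N
    induction N with
    | zero => simp [traj]
    | succ N ih =>
      rw [Finset.sum_range_succ, add_assoc]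
      exact le_trans (add_le_add_right (key (σ N) _) _) ih
  intro x
  refine iSup_le fun σ => ?_
  rw [ENNReal.tsum_eq_iSup_nat]
  refine iSup_le fun N => ?_
  rw [← ENNReal.ofReal_sum_of_nonneg (fun k _ => hc _)]
  refine ENNReal.ofReal_le_ofReal ?_
  calc (∑ k ∈ Finset.range N, c (traj f σ x k))
      ≤ (∑ k ∈ Finset.range N, c (traj f σ x k)) + W (traj f σ x N) :=
        le_add_of_nonneg_right (hWnn _)
    _ ≤ W x := hpartial σ x N
end

section
/- Let {V_α}_{α∈S} be nonnegative functions, c a cost, f_1,…,f_M maps, and μ ≥ 1. Suppose there exist nonnegative multipliers t_{γ,α,i,β,j} ≥ 0 such that for all x ∈ ℝⁿ and all (γ,α,i) ∈ S×S×⟨M⟩: V_γ(x) ≤ μc(x) + V_α(f_i(x)) + ∑_{(β,j)} t_{γ,α,i,β,j}·(V_β(f_j(x)) − V_α(f_i(x))). Then V(x) := max_{α∈S} V_α(x) satisfies V(x) ≤ μc(x) + max_{i∈⟨M⟩} V(f_i(x)) for all x. -/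
theorem stmt_13 {n M : ℕ} (hM : 0 < M) {S : Type} [Fintype S] [Nonempty S]
    (f : Fin M → (Fin n → ℝ) → (Fin n → ℝ))
    (c : (Fin n → ℝ) → ℝ) (hc : ∀ x, 0 ≤ c x)
    (V : S → (Fin n → ℝ) → ℝ) (hV : ∀ α x, 0 ≤ V α x)
    (μ : ℝ) (hμ : 1 ≤ μ)
    (t : S → S → Fin M → S → Fin M → ℝ)
    (ht : ∀ γ α i β j, 0 ≤ t γ α i β j)
    (hcert : ∀ (x : Fin n → ℝ) (γ α : S) (i : Fin M),
      V γ x ≤ μ * c x + V α (f i x) +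
        ∑ β : S, ∑ j : Fin M, t γ α i β j * (V β (f j x) - V α (f i x))) :
    ∀ x : Fin n → ℝ,
      (⨆ α : S, V α x) ≤ μ * c x + ⨆ i : Fin M, ⨆ α : S, V α (f i x) := by
  intro x
  haveI : NeZero M := ⟨hM.ne'⟩
  obtain ⟨⟨i0, a0⟩, hmax⟩ := Finite.exists_max (fun p : Fin M × S => V p.2 (f p.1 x))
  apply ciSup_le
  intro γ
  have h := hcert x γ a0 i0
  have hsum : (∑ β : S, ∑ j : Fin M, t γ a0 i0 β j * (V β (f j x) - V a0 (f i0 x))) ≤ 0 := by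
    apply Finset.sum_nonpos
    intro β _
    apply Finset.sum_nonpos
    intro j _
    exact mul_nonpos_of_nonneg_of_nonpos (ht _ _ _ _ _)
      (sub_nonpos.2 (hmax (j, β)))
  have h2 : V γ x ≤ μ * c x + V a0 (f i0 x) := by linarith
  refine h2.trans (add_le_add_right ?_ _)
  calc V a0 (f i0 x) ≤ ⨆ α : S, V α (f i0 x) :=
        le_ciSup (f := fun α : S => V α (f i0 x)) (Finite.bddAbove_range _) a0
    _ ≤ ⨆ i : Fin M, ⨆ α : S, V α (f i x) :=
        le_ciSup (f := fun i : Fin M => ⨆ α : S, V α (f i x)) (Finite.bddAbove_range _) i0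
end

section
/- Let {V_α}_{α∈S} be nonnegative functions, c a cost, f_1,…,f_M maps, and μ ≥ 1. Suppose there exist nonnegative multipliers s_{γ,α,i,ω,ζ} ≥ 0 and t_{γ,α,i,ω,j} ≥ 0 (indexed by γ,α ∈ S, i ∈ ⟨M⟩, ω ∈ S^M, ζ ∈ S, j ∈ ⟨M⟩) such that for all x and all (γ,α,i,ω): V_γ(x) + ∑_ζ s_{γ,α,i,ω,ζ}(V_ζ(x) − V_γ(x)) ≤ μc(x) + V_α(f_i(x)) + ∑_j t_{γ,α,i,ω,j}(V_{ω_j}(f_j(x)) − V_α(f_i(x))). Then V(x) := min_{α∈S} V_α(x) satisfies V(x) ≤ μc(x) + max_{i∈⟨M⟩} V(f_i(x)) for all x. -/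
theorem stmt_14 {n M : ℕ} (hM : 0 < M) {S : Type} [Fintype S] [Nonempty S]
    (f : Fin M → (Fin n → ℝ) → (Fin n → ℝ))
    (c : (Fin n → ℝ) → ℝ) (hc : ∀ x, 0 ≤ c x)
    (V : S → (Fin n → ℝ) → ℝ) (hV : ∀ α x, 0 ≤ V α x)
    (μ : ℝ) (hμ : 1 ≤ μ)
    (s : S → S → Fin M → (Fin M → S) → S → ℝ)
    (t : S → S → Fin M → (Fin M → S) → Fin M → ℝ)
    (hs : ∀ γ α i ω ζ, 0 ≤ s γ α i ω ζ)
    (ht : ∀ γ α i ω j, 0 ≤ t γ α i ω j)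
    (hcert : ∀ (x : Fin n → ℝ) (γ α : S) (i : Fin M) (ω : Fin M → S),
      V γ x + ∑ ζ : S, s γ α i ω ζ * (V ζ x - V γ x) ≤
        μ * c x + V α (f i x) +
          ∑ j : Fin M, t γ α i ω j * (V (ω j) (f j x) - V α (f i x))) :
    ∀ x : Fin n → ℝ,
      (⨅ α : S, V α x) ≤ μ * c x + ⨆ i : Fin M, ⨅ α : S, V α (f i x) := by
  intro x
  haveI : Nonempty (Fin M) := ⟨⟨0, hM⟩⟩
  obtain ⟨γ, hγ⟩ := Finite.exists_min (fun α => V α x)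
  obtain ⟨i, hi⟩ := Finite.exists_max (fun i : Fin M => ⨅ α : S, V α (f i x))
  have hω : ∀ j : Fin M, ∃ ζ : S, ∀ b, V ζ (f j x) ≤ V b (f j x) := fun j =>
    Finite.exists_min _
  choose ω hωmin using hω
  have hinf : ∀ j : Fin M, (⨅ α : S, V α (f j x)) = V (ω j) (f j x) := by
    intro j
    exact le_antisymm (ciInf_le (Set.Finite.bddBelow (Set.finite_range _)) _)
      (le_ciInf (hωmin j))
  have key := hcert x γ (ω i) i ω
  have h1 : 0 ≤ ∑ ζ : S, s γ (ω i) i ω ζ * (V ζ x - V γ x) :=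
    Finset.sum_nonneg fun ζ _ => mul_nonneg (hs _ _ _ _ _) (by linarith [hγ ζ])
  have h2 : ∑ j : Fin M, t γ (ω i) i ω j * (V (ω j) (f j x) - V (ω i) (f i x)) ≤ 0 := by
    apply Finset.sum_nonpos
    intro j _
    have hji := hi j
    rw [hinf j, hinf i] at hji
    exact mul_nonpos_of_nonneg_of_nonpos (ht _ _ _ _ _) (by linarith)
  have h3 : (⨅ α : S, V α x) ≤ V γ x :=
    ciInf_le (Set.Finite.bddBelow (Set.finite_range _)) _
  have h4 : (⨅ α : S, V α (f i x)) ≤ ⨆ i : Fin M, ⨅ α : S, V α (f i x) :=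
    le_ciSup (f := fun i : Fin M => ⨅ α : S, V α (f i x))
      (Set.Finite.bddAbove (Set.finite_range _)) i
  rw [hinf i] at h4
  linarith
end

section
/- Controller synthesis upper bound: let G = (S,E) be complete for ⟨M⟩, and suppose functions {V_α}_{α∈S} ⊆ ℝⁿ→ℝ≥0 and gains {K_α}_{α∈S} ⊆ ℝ^{m×n} satisfy V_α(x) ≥ c̃(x, K_αx) + V_β(A_i x + B_i K_α x) for all x and all (α,β,i) ∈ E. Define V(x) = min_{α∈S} V_α(x) and the policy φ(x) = K_{κ(x)}x where κ(x) ∈ argmin_α V_α(x). Then V(x) ≥ c(x) + max_{i∈⟨M⟩} V(A_i x + B_i φ(x)) for all x, where c(x) = c̃(x, φ(x)); consequently V(x) ≥ J^φ(x) ≥ J*(x). -/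
open scoped ENNReal
open Filter

open Matrix

theorem stmt_17 {n m M : ℕ} (hM : 0 < M) {S : Type} [Fintype S] [Nonempty S]
    (Eset : Set (S × S × Fin M))
    (hcomplete : ∀ (α : S) (i : Fin M), ∃ β : S, (α, β, i) ∈ Eset)
    (A : Fin M → Matrix (Fin n) (Fin n) ℝ)
    (B : Fin M → Matrix (Fin n) (Fin m) ℝ)
    (ct : (Fin n → ℝ) → (Fin m → ℝ) → ℝ) (hct : ∀ x u, 0 ≤ ct x u)
    (V : S → (Fin n → ℝ) → ℝ) (hV : ∀ α x, 0 ≤ V α x)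
    (K : S → Matrix (Fin m) (Fin n) ℝ)
    (hineq : ∀ (α β : S) (i : Fin M), (α, β, i) ∈ Eset → ∀ x : Fin n → ℝ,
      ct x (K α *ᵥ x) + V β (A i *ᵥ x + B i *ᵥ (K α *ᵥ x)) ≤ V α x)
    (κ : (Fin n → ℝ) → S) (hκ : ∀ (x : Fin n → ℝ) (α : S), V (κ x) x ≤ V α x) :
    (∀ x : Fin n → ℝ,
      ct x (K (κ x) *ᵥ x) +
          (⨆ i : Fin M, ⨅ α : S, V α (A i *ᵥ x + B i *ᵥ (K (κ x) *ᵥ x)))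
        ≤ ⨅ α : S, V α x) ∧
    (∀ x : Fin n → ℝ,
      valueFun (fun i y => A i *ᵥ y + B i *ᵥ (K (κ y) *ᵥ y))
          (fun y => ct y (K (κ y) *ᵥ y)) x
        ≤ ENNReal.ofReal (⨅ α : S, V α x)) ∧
    (∀ x : Fin n → ℝ,
      (⨅ φ : (Fin n → ℝ) → (Fin m → ℝ),
          valueFun (fun i y => A i *ᵥ y + B i *ᵥ φ y) (fun y => ct y (φ y)) x)
        ≤ valueFun (fun i y => A i *ᵥ y + B i *ᵥ (K (κ y) *ᵥ y))
            (fun y => ct y (K (κ y) *ᵥ y)) x) := by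
  haveI : Nonempty (Fin M) := Fin.pos_iff_nonempty.mp hM
  set W : (Fin n → ℝ) → ℝ := fun x => ⨅ α : S, V α x with hWdef
  have hbdd : ∀ y : Fin n → ℝ, BddBelow (Set.range fun α : S => V α y) :=
    fun y => (Set.finite_range _).bddBelow
  have hW0 : ∀ y, 0 ≤ W y := fun y => le_ciInf fun α => hV α y
  have hWκ : ∀ y, W y = V (κ y) y := fun y =>
    le_antisymm (ciInf_le (hbdd y) (κ y)) (le_ciInf fun α => hκ y α)
  have key : ∀ (y : Fin n → ℝ) (i : Fin M),
      ct y (K (κ y) *ᵥ y) + W (A i *ᵥ y + B i *ᵥ (K (κ y) *ᵥ y)) ≤ W y := by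
    intro y i
    obtain ⟨β, hβ⟩ := hcomplete (κ y) i
    have h1 : W (A i *ᵥ y + B i *ᵥ (K (κ y) *ᵥ y)) ≤
        V β (A i *ᵥ y + B i *ᵥ (K (κ y) *ᵥ y)) := ciInf_le (hbdd _) β
    have h2 := hineq (κ y) β i hβ y
    rw [hWκ y]
    linarith
  refine ⟨?_, ?_, ?_⟩
  · intro x
    rw [add_comm, ← le_sub_iff_add_le]
    exact ciSup_le fun i => by linarith [key x i]
  · intro x
    refine iSup_le fun σ => ?_
    set f : Fin M → (Fin n → ℝ) → (Fin n → ℝ) :=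
      fun i y => A i *ᵥ y + B i *ᵥ (K (κ y) *ᵥ y) with hfdef
    set c : (Fin n → ℝ) → ℝ := fun y => ct y (K (κ y) *ᵥ y) with hcdef
    have hpartial : ∀ N : ℕ,
        (∑ k ∈ Finset.range N, c (traj f σ x k)) + W (traj f σ x N) ≤ W x := by
      intro N
      induction N with
      | zero => simp [traj]
      | succ N ih =>
        rw [Finset.sum_range_succ]
        have hk := key (traj f σ x N) (σ N)
        have : traj f σ x (N + 1) = f (σ N) (traj f σ x N) := rfl
        rw [this]
        simp only [hfdef, hcdef] at *
        linarith
    rw [ENNReal.tsum_eq_iSup_nat]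
    refine iSup_le fun N => ?_
    rw [← ENNReal.ofReal_sum_of_nonneg (fun k _ => hct _ _)]
    refine ENNReal.ofReal_le_ofReal ?_
    have := hpartial N
    have := hW0 (traj f σ x N)
    linarith
  · intro x
    exact iInf_le _ (fun y => K (κ y) *ᵥ y)
end

section
/- Monotonicity over De Bruijn graphs: let g_l denote the optimal value of the problem minimizing min_{α ∈ ⟨M⟩^l} x_0ᵀ P_α x_0 over families {(P_α, K_α)}_{α ∈ ⟨M⟩^l} subject to P_α ⪰ (Q + K_αᵀRK_α) + (A_i + B_iK_α)ᵀ P_β (A_i + B_iK_α) for all edges (α,β,i) of the De Bruijn graph H_l(M). Then g_{l+1} ≤ g_l for all l: any feasible solution for order l lifts, via the truncation map π : ⟨M⟩^{l+1} → ⟨M⟩^l removing the last symbol (so P_α^{l+1} := P^l_{π(α)}, K_α^{l+1} := K^l_{π(α)}), to a feasible solution for order l+1 with the same objective value. -/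
open scoped ENNReal
open Matrix

/-- Edge relation of the De Bruijn graph of order `l` on `⟨M⟩`: there is an edge
from `α = (j_1,…,j_l)` to `β = (i, j_1,…,j_{l−1})` with label `i`. -/
def deBruijnEdge {M l : ℕ} (α β : Fin l → Fin M) (i : Fin M) : Prop :=
  (∀ h : 0 < l, β ⟨0, h⟩ = i) ∧
  (∀ (k : ℕ) (h : k + 1 < l), β ⟨k + 1, h⟩ = α ⟨k, Nat.lt_of_succ_lt h⟩)

/-- Feasibility of `{(P_α, K_α)}_{α ∈ ⟨M⟩^l}` for the order-`l` synthesis problem: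
`P_α ⪰ 0` and the control LMIs hold along all edges of `H_l(M)`. -/
def DBFeasible {n m M : ℕ} (A : Fin M → Matrix (Fin n) (Fin n) ℝ)
    (B : Fin M → Matrix (Fin n) (Fin m) ℝ)
    (Q : Matrix (Fin n) (Fin n) ℝ) (R : Matrix (Fin m) (Fin m) ℝ) (l : ℕ)
    (P : (Fin l → Fin M) → Matrix (Fin n) (Fin n) ℝ)
    (K : (Fin l → Fin M) → Matrix (Fin m) (Fin n) ℝ) : Prop :=
  (∀ α : Fin l → Fin M, (P α).PosSemidef) ∧
  ∀ (α β : Fin l → Fin M) (i : Fin M), deBruijnEdge α β i →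
    (P α - (Q + (K α)ᵀ * R * K α)
      - (A i + B i * K α)ᵀ * P β * (A i + B i * K α)).PosSemidef

/-- Optimal value `g_l` of the pointwise synthesis problem (`∞` if infeasible). -/
noncomputable def gVal {n m M : ℕ} (A : Fin M → Matrix (Fin n) (Fin n) ℝ)
    (B : Fin M → Matrix (Fin n) (Fin m) ℝ)
    (Q : Matrix (Fin n) (Fin n) ℝ) (R : Matrix (Fin m) (Fin m) ℝ)
    (x₀ : Fin n → ℝ) (l : ℕ) : ℝ≥0∞ :=
  ⨅ (P : (Fin l → Fin M) → Matrix (Fin n) (Fin n) ℝ)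
    (K : (Fin l → Fin M) → Matrix (Fin m) (Fin n) ℝ)
    (_ : DBFeasible A B Q R l P K),
      ENNReal.ofReal (⨅ α : Fin l → Fin M, x₀ ⬝ᵥ (P α *ᵥ x₀))

lemma pi_surj {M l : ℕ} (hM : 0 < M) :
    Function.Surjective (fun (α : Fin (l+1) → Fin M) (k : Fin l) => α k.castSucc) := by
  intro w
  exact ⟨Fin.snoc w ⟨0, hM⟩, funext fun k => Fin.snoc_castSucc _ _ _⟩

lemma edge_proj {M l : ℕ} {α β : Fin (l+1) → Fin M} {i : Fin M}
    (h : deBruijnEdge α β i) :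
    deBruijnEdge (fun k : Fin l => α k.castSucc) (fun k : Fin l => β k.castSucc) i := by
  obtain ⟨h0, hs⟩ := h
  constructor
  · intro hl
    exact h0 (Nat.succ_pos l)
  · intro k hk
    exact hs k (Nat.lt_succ_of_lt hk)

theorem stmt_18 {n m M : ℕ} (hM : 0 < M)
    (A : Fin M → Matrix (Fin n) (Fin n) ℝ)
    (B : Fin M → Matrix (Fin n) (Fin m) ℝ)
    (Q : Matrix (Fin n) (Fin n) ℝ) (R : Matrix (Fin m) (Fin m) ℝ)
    (hQ : Q.PosDef) (hR : R.PosDef) (x₀ : Fin n → ℝ) :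
    (∀ (l : ℕ) (P : (Fin l → Fin M) → Matrix (Fin n) (Fin n) ℝ)
        (K : (Fin l → Fin M) → Matrix (Fin m) (Fin n) ℝ),
      DBFeasible A B Q R l P K →
        DBFeasible A B Q R (l + 1)
            (fun α => P (fun k : Fin l => α k.castSucc))
            (fun α => K (fun k : Fin l => α k.castSucc)) ∧
          (⨅ α : Fin (l + 1) → Fin M,
              x₀ ⬝ᵥ (P (fun k : Fin l => α k.castSucc) *ᵥ x₀))
            = ⨅ α : Fin l → Fin M, x₀ ⬝ᵥ (P α *ᵥ x₀)) ∧
    (∀ l : ℕ, gVal A B Q R x₀ (l + 1) ≤ gVal A B Q R x₀ l) := by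
  have main : ∀ (l : ℕ) (P : (Fin l → Fin M) → Matrix (Fin n) (Fin n) ℝ)
      (K : (Fin l → Fin M) → Matrix (Fin m) (Fin n) ℝ),
      DBFeasible A B Q R l P K →
        DBFeasible A B Q R (l + 1)
            (fun α => P (fun k : Fin l => α k.castSucc))
            (fun α => K (fun k : Fin l => α k.castSucc)) ∧
          (⨅ α : Fin (l + 1) → Fin M,
              x₀ ⬝ᵥ (P (fun k : Fin l => α k.castSucc) *ᵥ x₀))
            = ⨅ α : Fin l → Fin M, x₀ ⬝ᵥ (P α *ᵥ x₀) := by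
    intro l P K hfeas
    obtain ⟨hpsd, hlmi⟩ := hfeas
    refine ⟨⟨fun α => hpsd _, fun α β i he => hlmi _ _ i (edge_proj he)⟩, ?_⟩
    have hsurj := pi_surj (l := l) hM
    have hr : Set.range (fun α : Fin (l+1) → Fin M =>
        x₀ ⬝ᵥ (P (fun k : Fin l => α k.castSucc) *ᵥ x₀))
        = Set.range (fun α : Fin l → Fin M => x₀ ⬝ᵥ (P α *ᵥ x₀)) := by
      have := Set.range_comp (fun α : Fin l → Fin M => x₀ ⬝ᵥ (P α *ᵥ x₀))
        (fun (α : Fin (l+1) → Fin M) (k : Fin l) => α k.castSucc)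
      rw [Function.comp_def] at this
      rw [this, Set.range_eq_univ.mpr hsurj, Set.image_univ]
    simp only [iInf]
    rw [hr]
  refine ⟨main, fun l => ?_⟩
  simp only [gVal]
  refine le_iInf fun P => le_iInf fun K => le_iInf fun hfeas => ?_
  obtain ⟨hfeas', heq⟩ := main l P K hfeas
  calc (⨅ (P' : (Fin (l+1) → Fin M) → Matrix (Fin n) (Fin n) ℝ)
        (K' : (Fin (l+1) → Fin M) → Matrix (Fin m) (Fin n) ℝ)
        (_ : DBFeasible A B Q R (l+1) P' K'),
        ENNReal.ofReal (⨅ α : Fin (l+1) → Fin M, x₀ ⬝ᵥ (P' α *ᵥ x₀)))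
      ≤ ENNReal.ofReal (⨅ α : Fin (l+1) → Fin M,
          x₀ ⬝ᵥ ((fun α => P (fun k : Fin l => α k.castSucc)) α *ᵥ x₀)) := by
        exact iInf₂_le_of_le _ _ (iInf_le _ hfeas')
    _ = ENNReal.ofReal (⨅ α : Fin l → Fin M, x₀ ⬝ᵥ (P α *ᵥ x₀)) := by rw [heq]
end
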